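/- arXiv:2309.06563 — 3 statements merged into one kernel-verified Lean document; each statement's English description precedes it below -/
import Mathlib

section
/- Let H be the Euclidean ball of radius R > 0 centered at the origin in ℝ^J, and let K = {(Θ, ϱ) ∈ S^J_+ × ℝ_+ : Tr(Θ) ≤ R² ϱ}. Then: (i) for any h₁,...,h_J ∈ H and υ ∈ ℝ^J_+, the pair (Σ_j υ_j h_j h_j^T, Σ_j υ_j) belongs to K; and (ii) conversely, for any (Θ, ϱ) ∈ K there exist h_j ∈ H and υ_j ≥ 0, j ≤ J, with Θ = Σ_j υ_j h_j h_j^T and Σ_j υ_j ≤ ϱ. -/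
open Matrix

lemma aux_trace_vecMulVec {J : ℕ} (v : Fin J → ℝ) :
    (Matrix.vecMulVec v v).trace = v ⬝ᵥ v := by
  simp [Matrix.trace, Matrix.vecMulVec_apply, Matrix.diag, dotProduct]

lemma aux_dot_le {J : ℕ} (R : ℝ) (hR : 0 < R) (v : Fin J → ℝ)
    (h : Real.sqrt (v ⬝ᵥ v) ≤ R) : v ⬝ᵥ v ≤ R ^ 2 := by
  have h0 : 0 ≤ v ⬝ᵥ v := by
    simpa [dotProduct] using Finset.sum_nonneg fun i _ => mul_self_nonneg (v i)
  calc v ⬝ᵥ v = Real.sqrt (v ⬝ᵥ v) ^ 2 := (Real.sq_sqrt h0).symm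
    _ ≤ R ^ 2 := pow_le_pow_left₀ (Real.sqrt_nonneg _) h 2

lemma aux_sum_mulVec {J : ℕ} (M : Fin J → Matrix (Fin J) (Fin J) ℝ) (x : Fin J → ℝ) :
    (∑ j, M j) *ᵥ x = ∑ j, M j *ᵥ x := by
  ext i
  simp only [Matrix.mulVec, dotProduct, Matrix.sum_apply, Finset.sum_apply, Finset.sum_mul]
  exact Finset.sum_comm

lemma aux_dot_sum {J : ℕ} (x : Fin J → ℝ) (v : Fin J → Fin J → ℝ) :
    x ⬝ᵥ (∑ j, v j) = ∑ j, x ⬝ᵥ v j := by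
  simp only [dotProduct, Finset.sum_apply, Finset.mul_sum]
  exact Finset.sum_comm

lemma aux_quadform {J : ℕ} (h : Fin J → Fin J → ℝ) (υ : Fin J → ℝ) (x : Fin J → ℝ) :
    x ⬝ᵥ ((∑ j, υ j • Matrix.vecMulVec (h j) (h j)) *ᵥ x)
      = ∑ j, υ j * (h j ⬝ᵥ x) ^ 2 := by
  rw [aux_sum_mulVec, aux_dot_sum]
  refine Finset.sum_congr rfl fun j _ => ?_
  have hv : (υ j • Matrix.vecMulVec (h j) (h j)) *ᵥ x = (υ j * (h j ⬝ᵥ x)) • h j := by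
    ext i
    simp only [Matrix.mulVec, Matrix.vecMulVec_apply, dotProduct, Matrix.smul_apply,
      smul_eq_mul, Pi.smul_apply, Finset.mul_sum]
    rw [Finset.sum_mul]
    exact Finset.sum_congr rfl fun k _ => by ring
  rw [hv, dotProduct_smul, smul_eq_mul, dotProduct_comm x (h j)]
  ring

theorem ball_cone_compatible {J : ℕ} (R : ℝ) (hR : 0 < R) :
    (∀ (h : Fin J → Fin J → ℝ) (υ : Fin J → ℝ),
      (∀ j, Real.sqrt (h j ⬝ᵥ h j) ≤ R) → (∀ j, 0 ≤ υ j) →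
      (∑ j, υ j • Matrix.vecMulVec (h j) (h j)).PosSemidef ∧
        (∑ j, υ j • Matrix.vecMulVec (h j) (h j)).trace ≤ R ^ 2 * ∑ j, υ j) ∧
    (∀ (Θ : Matrix (Fin J) (Fin J) ℝ) (ϱ : ℝ),
      Θ.PosSemidef → 0 ≤ ϱ → Θ.trace ≤ R ^ 2 * ϱ →
      ∃ (h : Fin J → Fin J → ℝ) (υ : Fin J → ℝ),
        (∀ j, Real.sqrt (h j ⬝ᵥ h j) ≤ R) ∧ (∀ j, 0 ≤ υ j) ∧
          Θ = ∑ j, υ j • Matrix.vecMulVec (h j) (h j) ∧ (∑ j, υ j) ≤ ϱ) := by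
  constructor
  · intro h υ hh hυ
    constructor
    · rw [Matrix.posSemidef_iff_dotProduct_mulVec]; constructor
      · unfold Matrix.IsHermitian
        ext i k
        simp [Matrix.conjTranspose_apply, Matrix.sum_apply, Matrix.smul_apply,
          Matrix.vecMulVec_apply, mul_comm]
      · intro x
        have := aux_quadform h υ x
        simp only [star_trivial] at *
        rw [this]
        exact Finset.sum_nonneg fun j _ =>
          mul_nonneg (hυ j) (sq_nonneg _)
    · rw [Matrix.trace_sum, Finset.mul_sum]
      refine Finset.sum_le_sum fun j _ => ?_
      rw [Matrix.trace_smul, aux_trace_vecMulVec, smul_eq_mul, mul_comm (R^2)]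
      exact mul_le_mul_of_nonneg_left (aux_dot_le R hR _ (hh j)) (hυ j)
  · intro Θ ϱ hΘ hϱ htr
    have hR2 : (0:ℝ) < R ^ 2 := pow_pos hR 2
    open scoped MatrixOrder in set B := CFC.sqrt Θ with hBdef
    open scoped MatrixOrder in have hB : B.PosSemidef := (CFC.sqrt_nonneg Θ).posSemidef
    open scoped MatrixOrder in have hBB : B * B = Θ := CFC.sqrt_mul_sqrt_self Θ hΘ.nonneg
    have hsym : ∀ i k, B i k = B k i := by
      intro i k
      have := congrFun (congrFun hB.1 i) k
      simpa [Matrix.conjTranspose_apply] using this.symm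
    have hdiag : ∀ j, 0 ≤ Θ j j := by
      intro j
      have := hΘ.dotProduct_mulVec_nonneg (Pi.single j 1)
      simpa [Matrix.mulVec, dotProduct, Pi.single_apply] using this
    have hcol : ∀ j, (fun i => B i j) ⬝ᵥ (fun i => B i j) = Θ j j := by
      intro j
      rw [← hBB]
      simp only [dotProduct, Matrix.mul_apply]
      exact Finset.sum_congr rfl fun i _ => by rw [hsym i j]
    have hΘsum : Θ = ∑ j, Matrix.vecMulVec (fun i => B i j) (fun i => B i j) := by
      ext i k
      rw [← hBB]
      simp only [Matrix.mul_apply, Matrix.sum_apply, Matrix.vecMulVec_apply]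
      exact Finset.sum_congr rfl fun j _ => by rw [hsym k j]
    refine ⟨fun j => if Θ j j = 0 then 0 else (R / Real.sqrt (Θ j j)) • (fun i => B i j),
      fun j => Θ j j / R ^ 2, ?_, ?_, ?_, ?_⟩
    · intro j
      by_cases hz : Θ j j = 0
      · simp [hz, hR.le]
      · have hpos : 0 < Θ j j := lt_of_le_of_ne (hdiag j) (Ne.symm hz)
        have hsq : Real.sqrt (Θ j j) ^ 2 = Θ j j := Real.sq_sqrt (hdiag j)
        have hsp : 0 < Real.sqrt (Θ j j) := Real.sqrt_pos.mpr hpos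
        have : ((R / Real.sqrt (Θ j j)) • (fun i => B i j)) ⬝ᵥ
            ((R / Real.sqrt (Θ j j)) • (fun i => B i j)) = R ^ 2 := by
          rw [smul_dotProduct, dotProduct_smul, hcol, smul_eq_mul, smul_eq_mul]
          field_simp
          rw [hsq]
        simp only [hz, if_false, this, Real.sqrt_sq hR.le, le_refl]
    · intro j
      exact div_nonneg (hdiag j) hR2.le
    · conv_lhs => rw [hΘsum]
      refine Finset.sum_congr rfl fun j _ => ?_
      by_cases hz : Θ j j = 0
      · have hcz : ∀ i, B i j = 0 := by
          have h0 : ∑ i, B i j * B i j = 0 := by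
            have := hcol j
            simpa [dotProduct, hz] using this
          intro i
          have := (Finset.sum_eq_zero_iff_of_nonneg
            (fun i _ => mul_self_nonneg (B i j))).mp h0 i (Finset.mem_univ i)
          exact mul_self_eq_zero.mp this
        ext i k
        simp [hz, Matrix.vecMulVec_apply, hcz]
      · have hpos : 0 < Θ j j := lt_of_le_of_ne (hdiag j) (Ne.symm hz)
        have hsq : Real.sqrt (Θ j j) ^ 2 = Θ j j := Real.sq_sqrt (hdiag j)
        have hsp : 0 < Real.sqrt (Θ j j) := Real.sqrt_pos.mpr hpos
        simp only [hz, if_false]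
        ext i k
        simp only [Matrix.smul_apply, Matrix.vecMulVec_apply, Pi.smul_apply, smul_eq_mul]
        have hss : Real.sqrt (Θ j j) * Real.sqrt (Θ j j) = Θ j j :=
          Real.mul_self_sqrt (hdiag j)
        field_simp
        rw [hsq]
    · have hts : Θ.trace = ∑ j, Θ j j := by simp [Matrix.trace, Matrix.diag]
      rw [← Finset.sum_div, ← hts, div_le_iff₀ hR2, mul_comm]
      exact htr
end

section
/- Let H = {g ∈ ℝ^N : ∃ r ∈ R, S_i[g]² ⪯ r_i I_{d_i}, i ≤ I} be a basic spectratope with S_i[g] = Σ_j g_j S^{ij} linear in g, and define K = {(Σ, ρ) ∈ S^N_+ × ℝ_+ : ∃ r ∈ R, S_i[Σ] ⪯ ρ r_i I_{d_i}, i ≤ I}, where S_i[G] = Σ_{p,q} G_{pq} S^{ip} S^{iq}. Then whenever Σ = Σ_j λ_j g_j g_j^T with λ_j ≥ 0 and g_j ∈ H for all j, one has (Σ, Σ_j λ_j) ∈ K. -/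
open Matrix

private lemma psd_smul {n : ℕ} {c : ℝ} (hc : 0 ≤ c)
    {A : Matrix (Fin n) (Fin n) ℝ} (hA : A.PosSemidef) : (c • A).PosSemidef := by
  refine ⟨?_, fun x => ?_⟩
  · unfold Matrix.IsHermitian
    rw [conjTranspose_smul, hA.1]
    simp
  · exact (hA.smul hc).2 x

private lemma psd_sum {n m : ℕ} (A : Fin m → Matrix (Fin n) (Fin n) ℝ)
    (hA : ∀ j, (A j).PosSemidef) : (∑ j, A j).PosSemidef := by
  classical
  refine Finset.sum_induction A _ (fun a b ha hb => ha.add hb) Matrix.PosSemidef.zero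
    (fun j _ => hA j)

private lemma psd_vecMulVec {n : ℕ} (v : Fin n → ℝ) : (vecMulVec v v).PosSemidef := by
  rw [vecMulVec_eq Unit]
  have h : replicateCol Unit v = (replicateRow Unit v)ᴴ := by
    rw [conjTranspose_replicateRow, star_trivial]
  rw [h]
  exact posSemidef_conjTranspose_mul_self _

private lemma triple_sum_comm {α : Type*} [AddCommMonoid α] {a b c : ℕ}
    (f : Fin a → Fin b → Fin c → α) :
    ∑ x, ∑ y, ∑ z, f x y z = ∑ z, ∑ x, ∑ y, f x y z := by
  have h1 : ∑ x, ∑ y, ∑ z, f x y z = ∑ x, ∑ z, ∑ y, f x y z :=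
    Finset.sum_congr rfl fun x _ => Finset.sum_comm
  rw [h1]
  exact Finset.sum_comm

theorem spectratope_cone_compat_i {N I M : ℕ}
    (d : Fin I → ℕ)
    (S : (i : Fin I) → Fin N → Matrix (Fin (d i)) (Fin (d i)) ℝ)
    (hSsym : ∀ i j, (S i j).IsSymm)
    (R : Set (Fin I → ℝ)) (hRconv : Convex ℝ R) (hRcomp : IsCompact R)
    (hRpos : R ⊆ {r | ∀ i, 0 ≤ r i}) (hRint : (interior R).Nonempty)
    (hRmono : ∀ r ∈ R, ∀ r' : Fin I → ℝ, (∀ i, 0 ≤ r' i) → (∀ i, r' i ≤ r i) → r' ∈ R)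
    (hnondeg : ∀ g : Fin N → ℝ, g ≠ 0 → ∃ i, (∑ j, g j • S i j) ≠ 0)
    (lam : Fin M → ℝ) (g : Fin M → Fin N → ℝ)
    (hlam : ∀ j, 0 ≤ lam j)
    (hg : ∀ j, ∃ r ∈ R, ∀ i,
      ((r i • (1 : Matrix (Fin (d i)) (Fin (d i)) ℝ)) -
        (∑ p, g j p • S i p) * (∑ p, g j p • S i p)).PosSemidef) :
    (∑ j, lam j • Matrix.vecMulVec (g j) (g j)).PosSemidef ∧
      ∃ r ∈ R, ∀ i,
        (((∑ j, lam j) * r i) • (1 : Matrix (Fin (d i)) (Fin (d i)) ℝ) -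
          ∑ p, ∑ q, (∑ j, lam j • Matrix.vecMulVec (g j) (g j)) p q • (S i p * S i q)).PosSemidef := by
  classical
  choose r hrR hrPSD using hg
  have key : ∀ i : Fin I,
      (∑ p, ∑ q, (∑ j, lam j • Matrix.vecMulVec (g j) (g j)) p q • (S i p * S i q)) =
      ∑ j, lam j • ((∑ p, g j p • S i p) * (∑ p, g j p • S i p)) := by
    intro i
    have expand : ∀ j, ((∑ p, g j p • S i p) * (∑ p, g j p • S i p)) =
        ∑ p, ∑ q, (g j p * g j q) • (S i p * S i q) := by
      intro j
      rw [Finset.sum_mul]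
      refine Finset.sum_congr rfl fun p _ => ?_
      rw [Finset.mul_sum]
      refine Finset.sum_congr rfl fun q _ => ?_
      rw [smul_mul_assoc, mul_smul_comm, smul_smul]
    simp only [expand, Finset.smul_sum, smul_smul, Matrix.sum_apply, Matrix.smul_apply,
      vecMulVec_apply, smul_eq_mul, Finset.sum_smul]
    exact triple_sum_comm _
  refine ⟨psd_sum _ (fun j => psd_smul (hlam j) (psd_vecMulVec (g j))), ?_⟩
  by_cases hρ : (∑ j, lam j) = 0
  · have hall : ∀ j, lam j = 0 := by
      intro j
      have := (Finset.sum_eq_zero_iff_of_nonneg (fun j _ => hlam j)).mp hρ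
      exact this j (Finset.mem_univ j)
    obtain ⟨r0, hr0⟩ := hRint
    refine ⟨r0, interior_subset hr0, fun i => ?_⟩
    rw [key]
    simp only [hall, zero_smul, Finset.sum_const_zero, hρ, zero_mul, sub_zero]
    exact Matrix.PosSemidef.zero
  · have hρpos : 0 < ∑ j, lam j :=
      lt_of_le_of_ne (Finset.sum_nonneg fun j _ => hlam j) (Ne.symm hρ)
    set ρ := ∑ j, lam j with hρdef
    refine ⟨∑ j, (lam j / ρ) • r j, ?_, fun i => ?_⟩
    · refine hRconv.sum_mem (fun j _ => div_nonneg (hlam j) hρpos.le) ?_ (fun j _ => hrR j)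
      rw [← Finset.sum_div, ← hρdef, div_self hρ]
    · rw [key]
      have hri : (∑ j, (lam j / ρ) • r j) i = ∑ j, (lam j / ρ) * r j i := by
        simp [Finset.sum_apply]
      have hmul : ρ * (∑ j, (lam j / ρ) • r j) i = ∑ j, lam j * r j i := by
        rw [hri, Finset.mul_sum]
        refine Finset.sum_congr rfl fun j _ => ?_
        field_simp
      rw [hmul]
      have : (∑ j, lam j * r j i) • (1 : Matrix (Fin (d i)) (Fin (d i)) ℝ) -
          ∑ j, lam j • ((∑ p, g j p • S i p) * (∑ p, g j p • S i p)) =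
          ∑ j, lam j • ((r j i • (1 : Matrix (Fin (d i)) (Fin (d i)) ℝ)) -
            (∑ p, g j p • S i p) * (∑ p, g j p • S i p)) := by
        simp only [smul_sub, smul_smul, Finset.sum_sub_distrib, Finset.sum_smul]
      rw [this]
      exact psd_sum _ (fun j => psd_smul (hlam j) (hrPSD j i))
end

section
/- Let Z₁,...,Z_K be i.i.d. real random variables and m their common distribution's property that Prob{|Z_k| > 1} ≤ 1/8 for each k, with K ≥ 2.5 ln(M/ε) for given M ≥ 1 and ε ∈ (0,1). Then the median y = med{Z₁,...,Z_K} satisfies Prob{|y| > 1} ≤ (√7/4)^K ≤ ε/M. -/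
open MeasureTheory ProbabilityTheory
open scoped Classical

lemma sqrt7_div4_le_exp : Real.sqrt 7 / 4 ≤ Real.exp (-(2/5)) := by
  have h20 : Real.exp (1/20) ≤ 20/19 := by
    have := Real.add_one_le_exp (-(1/20) : ℝ)
    have hpos : (0:ℝ) < 19/20 := by norm_num
    rw [Real.exp_neg] at this
    have h1 : (19/20 : ℝ) ≤ (Real.exp (1/20))⁻¹ := by linarith
    have := (le_inv_comm₀ hpos (Real.exp_pos _)).mp h1
    linarith [this]
  have hexp45 : Real.exp (4/5) ≤ 16/7 := by
    have h : Real.exp (4/5) = Real.exp (1/20) ^ (16:ℕ) := by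
      rw [← Real.exp_nat_mul]; norm_num
    rw [h]
    calc Real.exp (1/20) ^ (16:ℕ) ≤ (20/19 : ℝ) ^ (16:ℕ) :=
          pow_le_pow_left₀ (Real.exp_nonneg _) h20 16
      _ ≤ 16/7 := by norm_num
  have hsq : (Real.sqrt 7 / 4) ^ 2 ≤ (Real.exp (-(2/5))) ^ 2 := by
    have h7 : Real.sqrt 7 ^ 2 = 7 := Real.sq_sqrt (by norm_num)
    have : (Real.exp (-(2/5))) ^ 2 = Real.exp (-(4/5)) := by
      rw [← Real.exp_nat_mul]; norm_num
    rw [this, div_pow, h7, Real.exp_neg]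
    rw [le_inv_comm₀ (by norm_num) (Real.exp_pos _)]
    calc Real.exp (4/5) ≤ 16/7 := hexp45
      _ = (7/4^2 : ℝ)⁻¹ := by norm_num
  exact pow_le_pow_iff_left₀ (by positivity) (Real.exp_nonneg _) two_ne_zero |>.mp hsq

theorem median_tail_bound {K : ℕ}
    {Ω : Type*} [MeasurableSpace Ω] (P : Measure Ω) [IsProbabilityMeasure P]
    (Z : Fin K → Ω → ℝ) (hmeas : ∀ k, Measurable (Z k))
    (hindep : iIndepFun Z P)
    (hident : ∀ k k', IdentDistrib (Z k) (Z k') P P)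
    (hp : ∀ k, P {ω | 1 < |Z k ω|} ≤ ENNReal.ofReal (1 / 8))
    (M ε : ℝ) (hM : 1 ≤ M) (hε : ε ∈ Set.Ioo (0 : ℝ) 1)
    (hK : 2.5 * Real.log (M / ε) ≤ (K : ℝ))
    (y : Ω → ℝ)
    (hmed : ∀ ω,
      (K : ℝ) / 2 ≤ ((Finset.univ.filter (fun k => y ω ≤ Z k ω)).card : ℝ) ∧
      (K : ℝ) / 2 ≤ ((Finset.univ.filter (fun k => Z k ω ≤ y ω)).card : ℝ)) :
    P {ω | 1 < |y ω|} ≤ ENNReal.ofReal ((Real.sqrt 7 / 4) ^ K) ∧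
      (Real.sqrt 7 / 4) ^ K ≤ ε / M := by
  have hs_nonneg : (0:ℝ) ≤ Real.sqrt 7 / 4 := by positivity
  have hpow_nonneg : (0:ℝ) ≤ (Real.sqrt 7 / 4) ^ K := by positivity
  -- Part 2
  have part2 : (Real.sqrt 7 / 4) ^ K ≤ ε / M := by
    have hε0 := hε.1
    have hMε : (1:ℝ) ≤ M / ε := by
      rw [le_div_iff₀ hε0]; nlinarith [hε.2]
    have hlog : Real.log (M / ε) ≤ (2/5) * K := by nlinarith
    calc (Real.sqrt 7 / 4) ^ K ≤ (Real.exp (-(2/5))) ^ K :=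
          pow_le_pow_left₀ hs_nonneg sqrt7_div4_le_exp K
      _ = Real.exp ((K:ℝ) * (-(2/5))) := (Real.exp_nat_mul _ K).symm
      _ ≤ Real.exp (-Real.log (M / ε)) := by
          apply Real.exp_le_exp.mpr; linarith
      _ = ε / M := by
          rw [Real.exp_neg, Real.exp_log (by positivity)]
          rw [inv_div]
  refine ⟨?_, part2⟩
  -- Setup
  set t : ℝ := Real.log 7 with ht_def
  have ht0 : 0 ≤ t := Real.log_nonneg (by norm_num)
  have hexpt : Real.exp t = 7 := Real.exp_log (by norm_num)
  set X : Fin K → Ω → ℝ := fun k ω => if 1 < |Z k ω| then 1 else 0 with hX_def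
  have hXmeas : ∀ k, Measurable (X k) := by
    intro k
    exact Measurable.ite (measurableSet_lt measurable_const (hmeas k).abs)
      measurable_const measurable_const
  have hXindep : iIndepFun X P := by
    have := hindep.comp (fun _ x => if 1 < |x| then (1:ℝ) else 0)
      (fun _ => Measurable.ite (measurableSet_lt measurable_const measurable_abs)
        measurable_const measurable_const)
    exact this
  set S : Ω → ℝ := ∑ k : Fin K, X k with hS_def
  have hSapp : ∀ ω, S ω = ∑ k : Fin K, X k ω := by
    intro ω; simp [hS_def]
  -- inclusion of events
  have hsub : {ω | 1 < |y ω|} ⊆ {ω | (K:ℝ)/2 ≤ S ω} := by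
    intro ω hω
    simp only [Set.mem_setOf_eq] at hω ⊢
    have hcard : ∀ ω, S ω = ((Finset.univ.filter (fun k => 1 < |Z k ω|)).card : ℝ) := by
      intro ω; rw [hSapp]; simp [hX_def]
    rw [hcard]
    rcases lt_abs.mp hω with h | h
    · refine (hmed ω).1.trans ?_
      have : (Finset.univ.filter (fun k => y ω ≤ Z k ω)) ⊆
          (Finset.univ.filter (fun k => 1 < |Z k ω|)) := by
        intro k hk
        simp only [Finset.mem_filter, Finset.mem_univ, true_and] at hk ⊢
        exact lt_of_lt_of_le (lt_of_lt_of_le h hk) (le_abs_self _)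
      exact_mod_cast Finset.card_le_card this
    · refine (hmed ω).2.trans ?_
      have : (Finset.univ.filter (fun k => Z k ω ≤ y ω)) ⊆
          (Finset.univ.filter (fun k => 1 < |Z k ω|)) := by
        intro k hk
        simp only [Finset.mem_filter, Finset.mem_univ, true_and] at hk ⊢
        have : Z k ω ≤ -1 := by linarith [hk]
        calc (1:ℝ) < -Z k ω := by linarith
          _ ≤ |Z k ω| := neg_le_abs _
      exact_mod_cast Finset.card_le_card this
  -- mgf of each X k
  have hmgf : ∀ k, mgf (X k) P t ≤ 7/4 := by
    intro k
    have hA : MeasurableSet {ω | 1 < |Z k ω|} :=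
      measurableSet_lt measurable_const (hmeas k).abs
    have heq : (fun ω => Real.exp (t * X k ω)) =
        fun ω => Set.indicator {ω | 1 < |Z k ω|} (fun _ => (6:ℝ)) ω + 1 := by
      funext ω
      by_cases h : 1 < |Z k ω|
      · simp [hX_def, h, Set.indicator_of_mem, Set.mem_setOf_eq, hexpt]; norm_num
      · simp [hX_def, h, Set.indicator_of_notMem, Set.mem_setOf_eq]
    have hPA : (P {ω | 1 < |Z k ω|}).toReal ≤ 1/8 :=
      ENNReal.toReal_le_of_le_ofReal (by norm_num) (hp k)
    have : mgf (X k) P t =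
        6 * (P {ω | 1 < |Z k ω|}).toReal + 1 := by
      rw [mgf, heq]
      rw [integral_add ((integrable_const (6:ℝ)).indicator hA) (integrable_const 1)]
      rw [integral_indicator_const _ hA]
      simp [mul_comm, measureReal_def]
    rw [this]; linarith
  have hmgf_nonneg : ∀ k, 0 ≤ mgf (X k) P t := fun k => mgf_nonneg
  have hXint : ∀ k, Integrable (fun ω => Real.exp (t * X k ω)) P := by
    intro k
    have hA : MeasurableSet {ω | 1 < |Z k ω|} :=
      measurableSet_lt measurable_const (hmeas k).abs
    have heq : (fun ω => Real.exp (t * X k ω)) =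
        fun ω => Set.indicator {ω | 1 < |Z k ω|} (fun _ => (6:ℝ)) ω + 1 := by
      funext ω
      by_cases h : 1 < |Z k ω|
      · simp [hX_def, h, Set.indicator_of_mem, Set.mem_setOf_eq, hexpt]; norm_num
      · simp [hX_def, h, Set.indicator_of_notMem, Set.mem_setOf_eq]
    rw [heq]
    exact ((integrable_const (6:ℝ)).indicator hA).add (integrable_const 1)
  -- integrability of exp (t * S)
  have hSmeas : Measurable S := by
    have h : S = fun ω => ∑ k : Fin K, X k ω := funext hSapp
    rw [h]; exact Finset.measurable_sum _ (fun k _ => hXmeas k)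
  have hSle : ∀ ω, S ω ≤ K := by
    intro ω
    rw [hSapp]
    calc ∑ k : Fin K, X k ω ≤ ∑ _k : Fin K, (1:ℝ) := by
          apply Finset.sum_le_sum
          intro k _
          simp only [hX_def]
          split <;> norm_num
      _ = K := by simp
  have hSint : Integrable (fun ω => Real.exp (t * S ω)) P := by
    apply Integrable.mono' (integrable_const (Real.exp (t * K)))
    · exact ((hSmeas.const_mul t).exp).aestronglyMeasurable
    · filter_upwards with ω
      rw [Real.norm_eq_abs, abs_of_nonneg (Real.exp_nonneg _)]
      exact Real.exp_le_exp.mpr (mul_le_mul_of_nonneg_left (hSle ω) ht0)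
  -- Chernoff bound
  have hcher := measure_ge_le_exp_mul_mgf (X := S) (μ := P) (t := t) ((K:ℝ)/2) ht0 hSint
  have hmgfS : mgf S P t = ∏ k : Fin K, mgf (X k) P t := by
    rw [hS_def]
    exact hXindep.mgf_sum hXmeas Finset.univ
  have hprod : ∏ k : Fin K, mgf (X k) P t ≤ (7/4 : ℝ)^K := by
    calc ∏ k : Fin K, mgf (X k) P t ≤ ∏ _k : Fin K, (7/4 : ℝ) :=
        Finset.prod_le_prod (fun k _ => hmgf_nonneg k) (fun k _ => hmgf k)
      _ = (7/4 : ℝ)^K := by simp [div_pow]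
  -- identify the exponential factor
  have hexp_half : Real.exp (t/2) = Real.sqrt 7 := by
    have : Real.exp (t/2) ^ 2 = 7 := by
      have h2 : ((2:ℕ):ℝ) * (t/2) = t := by push_cast; ring
      rw [← Real.exp_nat_mul, h2, hexpt]
    rw [← this, Real.sqrt_sq (Real.exp_nonneg _)]
  have hfactor : Real.exp (-t * ((K:ℝ)/2)) * (7/4:ℝ)^K = (Real.sqrt 7 / 4)^K := by
    have h1 : Real.exp (-t * ((K:ℝ)/2)) = ((Real.sqrt 7)⁻¹) ^ K := by
      rw [show -t * ((K:ℝ)/2) = (K:ℝ) * (-(t/2)) by ring, Real.exp_nat_mul,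
        Real.exp_neg, hexp_half]
    rw [h1, ← mul_pow]
    congr 1
    have h7 : Real.sqrt 7 * Real.sqrt 7 = 7 := Real.mul_self_sqrt (by norm_num)
    have hs_pos : (0:ℝ) < Real.sqrt 7 := Real.sqrt_pos.mpr (by norm_num)
    rw [inv_mul_eq_div, div_eq_div_iff hs_pos.ne' (by norm_num : (4:ℝ) ≠ 0)]
    nlinarith [h7]
  -- conclude
  have hfin : (P {ω | (K:ℝ)/2 ≤ S ω}).toReal ≤ (Real.sqrt 7 / 4)^K := by
    calc (P {ω | (K:ℝ)/2 ≤ S ω}).toReal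
        ≤ Real.exp (-t * ((K:ℝ)/2)) * mgf S P t := hcher
      _ ≤ Real.exp (-t * ((K:ℝ)/2)) * (7/4:ℝ)^K := by
          apply mul_le_mul_of_nonneg_left _ (Real.exp_nonneg _)
          rw [hmgfS]; exact hprod
      _ = (Real.sqrt 7 / 4)^K := hfactor
  calc P {ω | 1 < |y ω|} ≤ P {ω | (K:ℝ)/2 ≤ S ω} := measure_mono hsub
    _ ≤ ENNReal.ofReal ((Real.sqrt 7 / 4) ^ K) := by
        rw [ENNReal.le_ofReal_iff_toReal_le (measure_ne_top P _) hpow_nonneg]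
        exact hfin
end
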